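/- Let v(s) = Σ_{j≥1} a_j cos(j s) with Σ j^{2k} a_j² < ∞ for some k ≥ 3. Then the operator L defined by L v (s) = (1/(4π)) ∫₀^{2π} log(1/(4 sin²(t/2))) [v(s−t) sin t + (v'(s−t) − v'(s)) cos t] dt − (1/(4π)) ∫₀^{2π} sin(t) v(s−t) dt satisfies L v (s) = Σ_{j≥1} ((j−1)/2) a_j sin(j s). -/

import Mathlib

namespace CDauxLinearization

open Real MeasureTheory Set intervalIntegral Filter Topology

set_option maxHeartbeats 1000000



lemma log_il_01 : IntervalIntegrable Real.log volume 0 1 := by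
  rw [intervalIntegrable_iff_integrableOn_Ioc_of_le (by norm_num)]
  have hrpow : IntegrableOn (fun x : ℝ => 2 * x ^ (-(1/2) : ℝ)) (Ioc 0 1) volume := by
    have h := (intervalIntegral.intervalIntegrable_rpow' (a := 0) (b := 1)
      (r := -(1/2)) (by norm_num))
    rw [intervalIntegrable_iff_integrableOn_Ioc_of_le (by norm_num)] at h
    exact h.const_mul 2
  refine hrpow.mono' Real.measurable_log.aestronglyMeasurable ?_
  refine (ae_restrict_iff' measurableSet_Ioc).2 (Filter.Eventually.of_forall ?_)
  rintro x ⟨hx0, hx1⟩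
  have hrp : (0:ℝ) < x ^ (-(1/2) : ℝ) := Real.rpow_pos_of_pos hx0 _
  have h1 : Real.log x ≤ 0 := Real.log_nonpos hx0.le hx1
  have h2 : -Real.log x = 2 * Real.log (x ^ (-(1/2) : ℝ)) := by
    rw [Real.log_rpow hx0]; ring
  have h3 : Real.log (x ^ (-(1/2) : ℝ)) ≤ x ^ (-(1/2) : ℝ) :=
    (Real.log_le_sub_one_of_pos hrp).trans (by linarith)
  rw [Real.norm_eq_abs, abs_of_nonpos h1]
  linarith

lemma log_il_0b {b : ℝ} (hb : 1 ≤ b) : IntervalIntegrable Real.log volume 0 b :=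
  log_il_01.trans (intervalIntegrable_log (by
    intro h
    rcases h with h
    have := Set.mem_uIcc.1 h
    rcases this with ⟨h1, _⟩ | ⟨_, h2⟩ <;> linarith))

lemma meas_logsin : Measurable (fun t : ℝ => Real.log (Real.sin (t/2))) :=
  Real.measurable_log.comp (Real.continuous_sin.comp (continuous_id.div_const 2)).measurable

lemma il_logsin_pi : IntervalIntegrable (fun t => Real.log (Real.sin (t/2))) volume 0 π := by
  rw [intervalIntegrable_iff_integrableOn_Ioc_of_le Real.pi_pos.le]
  have hbase : IntegrableOn (fun t : ℝ => ‖Real.log t‖ + Real.log π) (Ioc 0 π) volume := by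
    have h1 : IntegrableOn (fun t : ℝ => ‖Real.log t‖) (Ioc 0 π) volume := by
      have := (log_il_0b (b := π) (by linarith [Real.pi_gt_three])).norm
      rwa [intervalIntegrable_iff_integrableOn_Ioc_of_le Real.pi_pos.le] at this
    exact h1.add (integrableOn_const measure_Ioc_lt_top.ne)
  refine hbase.mono' meas_logsin.aestronglyMeasurable ?_
  refine (ae_restrict_iff' measurableSet_Ioc).2 (Filter.Eventually.of_forall ?_)
  rintro t ⟨ht0, htp⟩
  have hs2 : t / π ≤ Real.sin (t/2) := by
    have := Real.mul_le_sin (x := t/2) (by linarith) (by linarith)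
    calc t / π = 2 / π * (t/2) := by field_simp
    _ ≤ Real.sin (t/2) := this
  have htpi : (0:ℝ) < t / π := div_pos ht0 Real.pi_pos
  have hspos : 0 < Real.sin (t/2) := lt_of_lt_of_le htpi hs2
  have hsle : Real.sin (t/2) ≤ 1 := Real.sin_le_one _
  have hlognp : Real.log (Real.sin (t/2)) ≤ 0 := Real.log_nonpos hspos.le hsle
  have hlow : Real.log t - Real.log π ≤ Real.log (Real.sin (t/2)) := by
    have := Real.log_le_log htpi hs2
    rwa [Real.log_div (ne_of_gt ht0) (ne_of_gt Real.pi_pos)] at this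
  rw [Real.norm_eq_abs, abs_of_nonpos hlognp, Real.norm_eq_abs]
  have habs : -Real.log t ≤ |Real.log t| := neg_le_abs _
  linarith

lemma il_logsin_2pi : IntervalIntegrable (fun t => Real.log (Real.sin (t/2))) volume 0 (2*π) := by
  refine il_logsin_pi.trans ?_
  have h := il_logsin_pi.comp_sub_left (2*π)
  have he : (fun x : ℝ => Real.log (Real.sin ((2*π - x)/2))) =
      (fun x : ℝ => Real.log (Real.sin (x/2))) := by
    funext x
    rw [show (2*π - x)/2 = π - x/2 by ring, Real.sin_pi_sub]
  rw [he] at h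
  rw [show 2*π - 0 = 2*π by ring, show 2*π - π = π by ring] at h
  exact h.symm

lemma ae_interior : ∀ᵐ t ∂(volume.restrict (Set.uIoc (0:ℝ) (2*π))), t ∈ Ioo (0:ℝ) (2*π) := by
  have hne : ∀ᵐ t : ℝ ∂volume, t ≠ 2*π := by
    refine ae_iff.2 ?_
    simpa [Classical.not_not] using Real.volume_singleton (x := 2*π)
  filter_upwards [ae_restrict_mem measurableSet_uIoc, ae_restrict_of_ae hne] with t ht hne'
  rw [Set.uIoc_of_le (by positivity)] at ht
  exact ⟨ht.1, lt_of_le_of_ne ht.2 hne'⟩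

lemma sin_half_pos {t : ℝ} (ht : t ∈ Ioo (0:ℝ) (2*π)) : 0 < Real.sin (t/2) :=
  Real.sin_pos_of_pos_of_lt_pi (by linarith [ht.1]) (by linarith [ht.2])

lemma il_log2sin : IntervalIntegrable (fun t => Real.log (2 * Real.sin (t/2))) volume 0 (2*π) := by
  have h : IntervalIntegrable (fun t => Real.log 2 + Real.log (Real.sin (t/2))) volume 0 (2*π) :=
    (_root_.intervalIntegrable_const).add il_logsin_2pi
  refine h.congr_ae ?_
  filter_upwards [ae_interior] with t ht
  exact (Real.log_mul two_ne_zero (ne_of_gt (sin_half_pos ht))).symm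




-- elementary closed trig integrals
lemma integral_cos_freq (m : ℕ) :
    ∫ t in (0:ℝ)..(2*π), Real.cos ((m:ℝ) * t) = if m = 0 then 2*π else 0 := by
  rcases Nat.eq_zero_or_pos m with hm | hm
  · subst hm; simp [Real.two_pi_pos.le]
  · have hm' : ((m:ℝ)) ≠ 0 := by positivity
    rw [if_neg (by omega)]
    have hder : ∀ t : ℝ, HasDerivAt (fun t => Real.sin ((m:ℝ)*t) / m) (Real.cos ((m:ℝ)*t)) t := by
      intro t
      have h := ((Real.hasDerivAt_sin ((m:ℝ)*t)).comp t
        (((hasDerivAt_id t).const_mul ((m:ℝ)))))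
      have h2 := h.div_const (m:ℝ)
      exact h2.congr_deriv (by field_simp)
    rw [intervalIntegral.integral_eq_sub_of_hasDerivAt (fun x _ => hder x)
      ((Real.continuous_cos.comp (continuous_const.mul continuous_id)).intervalIntegrable 0 (2*π))]
    have h1 : Real.sin ((m:ℝ)*(2*π)) = 0 := by
      rw [show (m:ℝ)*(2*π) = ((2*m : ℕ):ℝ)*π by push_cast; ring]
      exact Real.sin_nat_mul_pi (2*m)
    simp [h1]

lemma integral_sin_freq (m : ℕ) :
    ∫ t in (0:ℝ)..(2*π), Real.sin ((m:ℝ) * t) = 0 := by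
  rcases Nat.eq_zero_or_pos m with hm | hm
  · subst hm; simp
  · have hm' : ((m:ℝ)) ≠ 0 := by positivity
    have hder : ∀ t : ℝ, HasDerivAt (fun t => -Real.cos ((m:ℝ)*t) / m) (Real.sin ((m:ℝ)*t)) t := by
      intro t
      have h := ((Real.hasDerivAt_cos ((m:ℝ)*t)).comp t
        (((hasDerivAt_id t).const_mul ((m:ℝ)))))
      have h2 := (h.div_const (m:ℝ)).neg
      convert h2 using 1
      · rfl
      · rfl
      · funext x; simp only [Function.comp_apply, Pi.neg_apply]; ring
      · field_simp
    rw [intervalIntegral.integral_eq_sub_of_hasDerivAt (fun x _ => hder x)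
      ((Real.continuous_sin.comp (continuous_const.mul continuous_id)).intervalIntegrable 0 (2*π))]
    have h1 : Real.cos ((m:ℝ)*(2*π)) = 1 := Real.cos_nat_mul_two_pi m
    simp [h1]

-- the cotangent identity
lemma cot_id (m : ℕ) (t : ℝ) (hs : Real.sin (t/2) ≠ 0) :
    Real.cos (t/2) * Real.sin (((m:ℝ)+1) * t) / Real.sin (t/2)
      = 1 + Real.cos (((m:ℝ)+1)*t) + 2 * ∑ k ∈ Finset.range m, Real.cos (((k:ℝ)+1) * t) := by
  induction m with
  | zero =>
      have h1 := Real.sin_two_mul (t/2)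
      rw [show 2*(t/2) = t by ring] at h1
      have h2 := Real.cos_two_mul (t/2)
      rw [show 2*(t/2) = t by ring] at h2
      simp only [Nat.cast_zero, zero_add, one_mul, Finset.range_zero, Finset.sum_empty, mul_zero,
        add_zero]
      field_simp
      rw [h1, h2]; ring
  | succ n ih =>
      have hd : Real.sin (((n:ℝ)+2)*t) - Real.sin (((n:ℝ)+1)*t)
          = 2 * Real.sin (t/2) * Real.cos ((2*(n:ℝ)+3)*t/2) := by
        rw [Real.sin_sub_sin, show ((((n:ℝ)+2)*t - ((n:ℝ)+1)*t)/2) = t/2 by ring,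
          show ((((n:ℝ)+2)*t + ((n:ℝ)+1)*t)/2) = (2*(n:ℝ)+3)*t/2 by ring]
      have hc : 2 * Real.cos (t/2) * Real.cos ((2*(n:ℝ)+3)*t/2)
          = Real.cos (((n:ℝ)+2)*t) + Real.cos (((n:ℝ)+1)*t) := by
        rw [show ((n:ℝ)+2)*t = (2*(n:ℝ)+3)*t/2 + t/2 by ring,
          show ((n:ℝ)+1)*t = (2*(n:ℝ)+3)*t/2 - t/2 by ring, Real.cos_add, Real.cos_sub]
        ring
      rw [Finset.sum_range_succ]
      push_cast
      push_cast at ih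
      field_simp
      field_simp at ih
      rw [show ((n:ℝ)+1+1) = ((n:ℝ)+2) by ring]
      linear_combination (norm := ring_nf) ih + Real.cos (t/2) * hd + Real.sin (t/2) * hc




lemma tendsto_G_zero (m : ℕ) :
    Tendsto (fun t => Real.log (2*Real.sin (t/2)) * Real.sin (((m:ℝ)+1)*t))
      (𝓝[>] (0:ℝ)) (𝓝 0) := by
  set n : ℝ := (m:ℝ)+1 with hn
  have hn0 : 0 < n := by positivity
  have hb : ∀ᶠ t in 𝓝[>] (0:ℝ), ‖Real.log (2*Real.sin (t/2)) * Real.sin (n*t)‖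
      ≤ n * (|Real.log t| * t + t * Real.log π) := by
    filter_upwards [Ioo_mem_nhdsGT_of_mem (by constructor <;> norm_num : (0:ℝ) ∈ Ico (0:ℝ) 1)]
      with t ht
    obtain ⟨ht0, ht1⟩ := ht
    have hpi3 := Real.pi_gt_three
    have hs_pos : 0 < Real.sin (t/2) :=
      Real.sin_pos_of_pos_of_lt_pi (by linarith) (by linarith)
    have hu_le : 2*Real.sin (t/2) ≤ t := by
      have h := Real.sin_lt (show 0 < t/2 by linarith)
      linarith
    have hu_ge : 2*t/π ≤ 2*Real.sin (t/2) := by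
      have h := Real.mul_le_sin (x := t/2) (by linarith) (by linarith)
      have hππ := Real.pi_pos
      rw [show 2/π*(t/2) = t/π by field_simp] at h
      rw [show 2*t/π = 2*(t/π) by ring]
      linarith
    have hu_pos : 0 < 2*Real.sin (t/2) := by positivity
    have hu1 : 2*Real.sin (t/2) ≤ 1 := le_trans hu_le ht1.le
    have hlogu_le : Real.log (2*Real.sin (t/2)) ≤ Real.log t := Real.log_le_log hu_pos hu_le
    have hlogu_ge : Real.log t - Real.log π ≤ Real.log (2*Real.sin (t/2)) := by
      have h1 : Real.log (2*t/π) ≤ Real.log (2*Real.sin (t/2)) :=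
        Real.log_le_log (by positivity) hu_ge
      have h2 : Real.log (2*t/π) = Real.log 2 + Real.log t - Real.log π := by
        rw [Real.log_div (by positivity) (ne_of_gt Real.pi_pos),
          Real.log_mul two_ne_zero (ne_of_gt ht0)]
      have hl2 : 0 ≤ Real.log 2 := Real.log_nonneg one_le_two
      linarith
    have habs : |Real.log (2*Real.sin (t/2))| ≤ |Real.log t| + Real.log π := by
      have hlu : Real.log (2*Real.sin (t/2)) ≤ 0 := Real.log_nonpos hu_pos.le hu1
      have hta : -Real.log t ≤ |Real.log t| := neg_le_abs _
      rw [abs_of_nonpos hlu]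
      linarith
    have hsin : |Real.sin (n*t)| ≤ n*t := by
      have h := Real.abs_sin_le_abs (x := n*t)
      rwa [abs_of_nonneg (mul_nonneg hn0.le ht0.le)] at h
    rw [norm_mul, Real.norm_eq_abs, Real.norm_eq_abs]
    calc |Real.log (2*Real.sin (t/2))| * |Real.sin (n*t)|
        ≤ (|Real.log t| + Real.log π) * (n*t) :=
          mul_le_mul habs hsin (abs_nonneg _)
            (by have := abs_nonneg (Real.log t)
                have := Real.log_nonneg (by linarith : (1:ℝ) ≤ π)
                linarith)
      _ = n * (|Real.log t| * t + t * Real.log π) := by ring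
  have h1 : Tendsto (fun t : ℝ => Real.log t * t) (𝓝[>] (0:ℝ)) (𝓝 0) := by
    have := tendsto_log_mul_rpow_nhdsGT_zero zero_lt_one
    simpa [Real.rpow_one] using this
  have h2 : Tendsto (fun t : ℝ => |Real.log t| * t) (𝓝[>] (0:ℝ)) (𝓝 0) := by
    have h := h1.abs
    rw [abs_zero] at h
    refine h.congr' ?_
    filter_upwards [self_mem_nhdsWithin] with x hx
    rw [abs_mul, abs_of_pos (show 0 < x from hx)]
  have h3 : Tendsto (fun t : ℝ => t * Real.log π) (𝓝[>] (0:ℝ)) (𝓝 0) := by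
    have h0 : Tendsto (fun t : ℝ => t) (𝓝[>] (0:ℝ)) (𝓝 0) :=
      tendsto_nhdsWithin_of_tendsto_nhds (continuous_id.tendsto 0)
    have := h0.mul_const (Real.log π)
    simpa using this
  have hlim : Tendsto (fun t : ℝ => n * (|Real.log t| * t + t * Real.log π))
      (𝓝[>] (0:ℝ)) (𝓝 0) := by
    have := ((h2.add h3).const_mul n)
    simpa using this
  exact squeeze_zero_norm' hb hlim

lemma tendsto_G_two_pi (m : ℕ) :
    Tendsto (fun t => Real.log (2*Real.sin (t/2)) * Real.sin (((m:ℝ)+1)*t))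
      (𝓝[<] (2*π)) (𝓝 0) := by
  have hcomp : Tendsto (fun t : ℝ => 2*π - t) (𝓝[<] (2*π)) (𝓝[>] (0:ℝ)) := by
    apply tendsto_nhdsWithin_of_tendsto_nhds_of_eventually_within
    · have : Tendsto (fun t : ℝ => 2*π - t) (𝓝 (2*π)) (𝓝 (2*π - 2*π)) :=
        (continuous_const.sub continuous_id).tendsto (2*π)
      rw [sub_self] at this
      exact this.mono_left nhdsWithin_le_nhds
    · filter_upwards [self_mem_nhdsWithin] with x hx
      simp only [Set.mem_Iio] at hx
      simp only [Set.mem_Ioi]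
      linarith
  have hkey := ((tendsto_G_zero m).comp hcomp).neg
  rw [neg_zero] at hkey
  refine hkey.congr ?_
  intro t
  simp only [Function.comp_apply]
  have h1 : Real.sin ((2*π - t)/2) = Real.sin (t/2) := by
    rw [show (2*π - t)/2 = π - t/2 by ring, Real.sin_pi_sub]
  have h2 : Real.sin (((m:ℝ)+1)*(2*π - t)) = -Real.sin (((m:ℝ)+1)*t) := by
    have := Real.sin_nat_mul_two_pi_sub (((m:ℝ)+1)*t) (m+1)
    rw [show (((m+1 : ℕ)):ℝ)*(2*π) - ((m:ℝ)+1)*t = ((m:ℝ)+1)*(2*π - t) by push_cast; ring] at this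
    exact this
  rw [h1, h2]
  ring




lemma meas_log2sin : Measurable (fun t : ℝ => Real.log (2 * Real.sin (t/2))) :=
  Real.measurable_log.comp
    ((continuous_const.mul (Real.continuous_sin.comp (continuous_id.div_const 2))).measurable)

lemma il_log2sin_mul {g : ℝ → ℝ} {C : ℝ} (hg : Measurable g) (hb : ∀ x, |g x| ≤ C) :
    IntervalIntegrable (fun t => Real.log (2*Real.sin (t/2)) * g t) volume 0 (2*π) := by
  have h1 := il_log2sin.norm
  rw [intervalIntegrable_iff] at h1 ⊢
  refine ((h1.const_mul C).mono' ((meas_log2sin.mul hg).aestronglyMeasurable) ?_)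
  refine Filter.Eventually.of_forall fun x => ?_
  rw [norm_mul]
  calc ‖Real.log (2*Real.sin (x/2))‖ * ‖g x‖
      ≤ ‖Real.log (2*Real.sin (x/2))‖ * C :=
        mul_le_mul_of_nonneg_left (by simpa [Real.norm_eq_abs] using hb x) (norm_nonneg _)
    _ = C * ‖Real.log (2*Real.sin (x/2))‖ := by ring

-- the trig polynomial equal a.e. to the cotangent part
noncomputable def Q (m : ℕ) (t : ℝ) : ℝ :=
  (1 + Real.cos (((m:ℝ)+1)*t) + 2 * ∑ k ∈ Finset.range m, Real.cos (((k:ℝ)+1) * t)) / 2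

lemma continuous_Q (m : ℕ) : Continuous (Q m) := by
  unfold Q; fun_prop

lemma Q_integral (m : ℕ) : ∫ t in (0:ℝ)..(2*π), Q m t = π := by
  unfold Q
  rw [intervalIntegral.integral_div]
  have hc1 : IntervalIntegrable (fun t : ℝ => Real.cos (((m:ℝ)+1)*t)) volume 0 (2*π) := by
    apply Continuous.intervalIntegrable; fun_prop
  have hcs : IntervalIntegrable
      (fun t : ℝ => 2 * ∑ k ∈ Finset.range m, Real.cos (((k:ℝ)+1) * t)) volume 0 (2*π) := by
    apply Continuous.intervalIntegrable; fun_prop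
  have hconst : IntervalIntegrable (fun _ : ℝ => (1:ℝ)) volume 0 (2*π) :=
    _root_.intervalIntegrable_const
  rw [intervalIntegral.integral_add (hconst.add hc1) hcs,
    intervalIntegral.integral_add hconst hc1]
  have e1 : ∫ _ in (0:ℝ)..(2*π), (1:ℝ) = 2*π := by simp [Real.two_pi_pos.le]
  have e2 : ∫ t in (0:ℝ)..(2*π), Real.cos (((m:ℝ)+1)*t) = 0 := by
    have := integral_cos_freq (m+1)
    rw [if_neg (by omega)] at this
    rw [← this]
    congr 1; funext t; push_cast; ring_nf
  have e3 : ∫ t in (0:ℝ)..(2*π),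
      (2 * ∑ k ∈ Finset.range m, Real.cos (((k:ℝ)+1) * t)) = 0 := by
    rw [intervalIntegral.integral_const_mul]
    rw [intervalIntegral.integral_finset_sum]
    · have : ∀ k ∈ Finset.range m, (∫ t in (0:ℝ)..(2*π), Real.cos (((k:ℝ)+1) * t)) = 0 := by
        intro k _
        have := integral_cos_freq (k+1)
        rw [if_neg (by omega)] at this
        rw [← this]
        congr 1; funext t; push_cast; ring_nf
      rw [Finset.sum_congr rfl this]
      simp
    · intro k _
      apply Continuous.intervalIntegrable; fun_prop
  rw [e1, e2, e3]
  ring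

lemma cot_part_integrable (m : ℕ) :
    IntervalIntegrable
      (fun t => Real.cos (t/2)/(2*Real.sin (t/2)) * Real.sin (((m:ℝ)+1)*t)) volume 0 (2*π) := by
  refine ((continuous_Q m).intervalIntegrable 0 (2*π)).congr_ae ?_
  filter_upwards [ae_interior] with t ht
  have hs := sin_half_pos ht
  unfold Q
  rw [← cot_id m t (ne_of_gt hs)]
  ring

lemma cot_part_integral (m : ℕ) :
    ∫ t in (0:ℝ)..(2*π), Real.cos (t/2)/(2*Real.sin (t/2)) * Real.sin (((m:ℝ)+1)*t) = π := by
  have hcong : ∫ t in (0:ℝ)..(2*π), Real.cos (t/2)/(2*Real.sin (t/2)) * Real.sin (((m:ℝ)+1)*t)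
      = ∫ t in (0:ℝ)..(2*π), Q m t := by
    apply intervalIntegral.integral_congr_ae
    have hne : ∀ᵐ t : ℝ ∂volume, t ≠ 2*π := by
      refine ae_iff.2 ?_
      simpa [Classical.not_not] using Real.volume_singleton (x := 2*π)
    filter_upwards [hne] with t htne htI
    rw [Set.uIoc_of_le Real.two_pi_pos.le] at htI
    have ht : t ∈ Ioo (0:ℝ) (2*π) := ⟨htI.1, lt_of_le_of_ne htI.2 htne⟩
    have hs := sin_half_pos ht
    unfold Q
    rw [← cot_id m t (ne_of_gt hs)]
    ring
  rw [hcong, Q_integral]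

theorem log2sin_cos_integral (m : ℕ) :
    ∫ t in (0:ℝ)..(2*π), Real.log (2*Real.sin (t/2)) * Real.cos (((m:ℝ)+1)*t)
      = -π/((m:ℝ)+1) := by
  set n : ℝ := (m:ℝ)+1 with hn
  have hn0 : (0:ℝ) < n := by positivity
  set f' : ℝ → ℝ := fun x => Real.cos (x/2)/(2*Real.sin (x/2)) * Real.sin (n*x)
    + (Real.log (2*Real.sin (x/2)) * Real.cos (n*x)) * n with hf'
  have hint2 : IntervalIntegrable
      (fun t => (Real.log (2*Real.sin (t/2)) * Real.cos (n*t)) * n) volume 0 (2*π) := by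
    have h := il_log2sin_mul (g := fun t => Real.cos (n*t) * n) (C := |n|)
      ((Real.measurable_cos.comp (measurable_const.mul measurable_id)).mul measurable_const)
      (fun x => by
        rw [abs_mul]
        calc |Real.cos (n*x)| * |n| ≤ 1 * |n| :=
          mul_le_mul_of_nonneg_right (Real.abs_cos_le_one _) (abs_nonneg _)
        _ = |n| := one_mul _)
    refine h.congr_ae (Filter.Eventually.of_forall fun x => by ring)
  have hint : IntervalIntegrable f' volume 0 (2*π) :=
    (cot_part_integrable m).add hint2
  have hderiv : ∀ x ∈ Ioo (0:ℝ) (2*π),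
      HasDerivAt (fun t => Real.log (2*Real.sin (t/2)) * Real.sin (n*t)) (f' x) x := by
    intro x hx
    have hs := sin_half_pos hx
    have hu : HasDerivAt (fun t : ℝ => 2*Real.sin (t/2)) (Real.cos (x/2)) x := by
      have h1 := (Real.hasDerivAt_sin (x/2)).comp x ((hasDerivAt_id x).div_const 2)
      have h2 := h1.const_mul (2:ℝ)
      exact h2.congr_deriv (by ring)
    have hlog : HasDerivAt (fun t => Real.log (2*Real.sin (t/2)))
        (Real.cos (x/2)/(2*Real.sin (x/2))) x := by
      have h := (Real.hasDerivAt_log (by positivity : (2*Real.sin (x/2)) ≠ 0)).comp x hu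
      exact h.congr_deriv (by field_simp)
    have hsin : HasDerivAt (fun t => Real.sin (n*t)) (Real.cos (n*x) * n) x := by
      have h := (Real.hasDerivAt_sin (n*x)).comp x ((hasDerivAt_id x).const_mul n)
      exact h.congr_deriv (by ring)
    have := hlog.mul hsin
    exact this.congr_deriv (by rw [hf']; ring)
  have hFTC := intervalIntegral.integral_eq_sub_of_hasDerivAt_of_tendsto
    (f := fun t => Real.log (2*Real.sin (t/2)) * Real.sin (n*t)) (f' := f')
    (by positivity : (0:ℝ) < 2*π) hderiv hint (tendsto_G_zero m) (tendsto_G_two_pi m)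
  rw [sub_zero] at hFTC
  have hsplit : ∫ t in (0:ℝ)..(2*π), f' t
      = (∫ t in (0:ℝ)..(2*π), Real.cos (t/2)/(2*Real.sin (t/2)) * Real.sin (n*t))
        + (∫ t in (0:ℝ)..(2*π), (Real.log (2*Real.sin (t/2)) * Real.cos (n*t)) * n) := by
    rw [← intervalIntegral.integral_add (cot_part_integrable m) hint2]
  rw [hsplit, cot_part_integral m, intervalIntegral.integral_mul_const] at hFTC
  have : (∫ t in (0:ℝ)..(2*π), Real.log (2*Real.sin (t/2)) * Real.cos (n*t)) * n = -π := by
    linarith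
  field_simp at this ⊢
  linarith

theorem log2sin_sin_integral (m : ℕ) :
    ∫ t in (0:ℝ)..(2*π), Real.log (2*Real.sin (t/2)) * Real.sin ((m:ℝ)*t) = 0 := by
  have hsymm : ∫ t in (0:ℝ)..(2*π), Real.log (2*Real.sin ((2*π - t)/2)) * Real.sin ((m:ℝ)*(2*π - t))
      = ∫ t in (0:ℝ)..(2*π), Real.log (2*Real.sin (t/2)) * Real.sin ((m:ℝ)*t) := by
    have h := intervalIntegral.integral_comp_sub_left
      (f := fun t => Real.log (2*Real.sin (t/2)) * Real.sin ((m:ℝ)*t)) (a := (0:ℝ)) (b := 2*π) (2*π)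
    rw [show 2*π - (2*π) = 0 by ring, show 2*π - 0 = 2*π by ring] at h
    exact h
  have heq : ∀ t : ℝ, Real.log (2*Real.sin ((2*π - t)/2)) * Real.sin ((m:ℝ)*(2*π - t))
      = -(Real.log (2*Real.sin (t/2)) * Real.sin ((m:ℝ)*t)) := by
    intro t
    have h1 : Real.sin ((2*π - t)/2) = Real.sin (t/2) := by
      rw [show (2*π - t)/2 = π - t/2 by ring, Real.sin_pi_sub]
    have h2 : Real.sin ((m:ℝ)*(2*π - t)) = -Real.sin ((m:ℝ)*t) := by
      have := Real.sin_nat_mul_two_pi_sub ((m:ℝ)*t) m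
      rw [show ((m:ℕ):ℝ)*(2*π) - (m:ℝ)*t = (m:ℝ)*(2*π - t) by push_cast; ring] at this
      exact this
    rw [h1, h2]; ring
  have : ∫ t in (0:ℝ)..(2*π), Real.log (2*Real.sin (t/2)) * Real.sin ((m:ℝ)*t)
      = -∫ t in (0:ℝ)..(2*π), Real.log (2*Real.sin (t/2)) * Real.sin ((m:ℝ)*t) := by
    nth_rewrite 1 [← hsymm]
    rw [intervalIntegral.integral_congr (fun t _ => heq t), intervalIntegral.integral_neg]
  linarith




lemma integral_congr_interior {f g : ℝ → ℝ} (h : ∀ t ∈ Ioo (0:ℝ) (2*π), f t = g t) :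
    ∫ t in (0:ℝ)..(2*π), f t = ∫ t in (0:ℝ)..(2*π), g t := by
  apply intervalIntegral.integral_congr_ae
  have hne : ∀ᵐ t : ℝ ∂volume, t ≠ 2*π := by
    refine ae_iff.2 ?_
    simpa [Classical.not_not] using Real.volume_singleton (x := 2*π)
  filter_upwards [hne] with t htne htI
  rw [Set.uIoc_of_le Real.two_pi_pos.le] at htI
  exact h t ⟨htI.1, lt_of_le_of_ne htI.2 htne⟩

lemma W_eq_interior {t : ℝ} (ht : t ∈ Ioo (0:ℝ) (2*π)) :
    Real.log (1/(4*Real.sin (t/2)^2)) = -2 * Real.log (2*Real.sin (t/2)) := by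
  have hs := sin_half_pos ht
  rw [show 4*Real.sin (t/2)^2 = (2*Real.sin (t/2))^2 by ring, one_div, Real.log_inv,
    Real.log_pow]
  push_cast
  ring

lemma il_W_mul {g : ℝ → ℝ} {C : ℝ} (hg : Measurable g) (hb : ∀ x, |g x| ≤ C) :
    IntervalIntegrable (fun t => Real.log (1/(4*Real.sin (t/2)^2)) * g t) volume 0 (2*π) := by
  have h := il_log2sin_mul (g := fun t => (-2) * g t) (C := 2*C)
    (measurable_const.mul hg)
    (fun x => by
      rw [abs_mul]
      have := hb x
      have h2 : |(-2 : ℝ)| = 2 := by norm_num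
      rw [h2]
      nlinarith [abs_nonneg (g x)])
  refine h.congr_ae ?_
  filter_upwards [ae_interior] with t ht
  rw [W_eq_interior ht]
  ring

lemma il_W : IntervalIntegrable (fun t => Real.log (1/(4*Real.sin (t/2)^2))) volume 0 (2*π) := by
  have h := il_W_mul (g := fun _ => (1:ℝ)) (C := 1) measurable_const (fun x => by norm_num)
  refine h.congr_ae (Filter.Eventually.of_forall fun x => by ring)

lemma W_cos_integral (m : ℕ) :
    ∫ t in (0:ℝ)..(2*π), Real.log (1/(4*Real.sin (t/2)^2)) * Real.cos (((m:ℝ)+1)*t)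
      = 2*π/((m:ℝ)+1) := by
  have hcong := integral_congr_interior
    (f := fun t => Real.log (1/(4*Real.sin (t/2)^2)) * Real.cos (((m:ℝ)+1)*t))
    (g := fun t => (-2) * (Real.log (2*Real.sin (t/2)) * Real.cos (((m:ℝ)+1)*t)))
    (fun t ht => by rw [W_eq_interior ht]; ring)
  rw [hcong, intervalIntegral.integral_const_mul, log2sin_cos_integral]
  have : ((m:ℝ)+1) ≠ 0 := by positivity
  field_simp

lemma W_sin_integral (m : ℕ) :
    ∫ t in (0:ℝ)..(2*π), Real.log (1/(4*Real.sin (t/2)^2)) * Real.sin ((m:ℝ)*t) = 0 := by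
  have hcong := integral_congr_interior
    (f := fun t => Real.log (1/(4*Real.sin (t/2)^2)) * Real.sin ((m:ℝ)*t))
    (g := fun t => (-2) * (Real.log (2*Real.sin (t/2)) * Real.sin ((m:ℝ)*t)))
    (fun t ht => by rw [W_eq_interior ht]; ring)
  rw [hcong, intervalIntegral.integral_const_mul, log2sin_sin_integral]
  ring

/-- the second (easy) integral -/
lemma J_int (j : ℕ) (s α : ℝ) :
    ∫ t in (0:ℝ)..(2*π), Real.sin t * (α * Real.cos ((((j:ℝ)+1))*(s-t)))
      = if j = 0 then π * α * Real.sin s else 0 := by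
  set n : ℝ := (j:ℝ)+1 with hn
  have hB : ∀ t : ℝ, Real.sin t * (α * Real.cos (n*(s-t)))
      = (α * Real.cos (n*s)/2) * Real.sin (((j:ℝ)+2)*t)
        - (α * Real.cos (n*s)/2) * Real.sin ((j:ℝ)*t)
        + (α * Real.sin (n*s)/2) * Real.cos ((j:ℝ)*t)
        - (α * Real.sin (n*s)/2) * Real.cos (((j:ℝ)+2)*t) := by
    intro t
    rw [show n*(s-t) = n*s - n*t by ring, show ((j:ℝ)+2)*t = n*t + t by rw [hn]; ring,
      show (j:ℝ)*t = n*t - t by rw [hn]; ring,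
      Real.cos_sub, Real.sin_add, Real.sin_sub, Real.cos_sub, Real.cos_add]
    ring
  have hfun : (fun t => Real.sin t * (α * Real.cos (n*(s-t))))
      = fun t => (α * Real.cos (n*s)/2) * Real.sin (((j:ℝ)+2)*t)
        - (α * Real.cos (n*s)/2) * Real.sin ((j:ℝ)*t)
        + (α * Real.sin (n*s)/2) * Real.cos ((j:ℝ)*t)
        - (α * Real.sin (n*s)/2) * Real.cos (((j:ℝ)+2)*t) := funext hB
  rw [hfun]
  have i1 : IntervalIntegrable (fun t => (α * Real.cos (n*s)/2) * Real.sin (((j:ℝ)+2)*t))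
      volume 0 (2*π) := by apply Continuous.intervalIntegrable; fun_prop
  have i2 : IntervalIntegrable (fun t => (α * Real.cos (n*s)/2) * Real.sin ((j:ℝ)*t))
      volume 0 (2*π) := by apply Continuous.intervalIntegrable; fun_prop
  have i3 : IntervalIntegrable (fun t => (α * Real.sin (n*s)/2) * Real.cos ((j:ℝ)*t))
      volume 0 (2*π) := by apply Continuous.intervalIntegrable; fun_prop
  have i4 : IntervalIntegrable (fun t => (α * Real.sin (n*s)/2) * Real.cos (((j:ℝ)+2)*t))
      volume 0 (2*π) := by apply Continuous.intervalIntegrable; fun_prop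
  rw [intervalIntegral.integral_sub ((i1.sub i2).add i3) i4,
    intervalIntegral.integral_add (i1.sub i2) i3, intervalIntegral.integral_sub i1 i2]
  simp only [intervalIntegral.integral_const_mul]
  have e1 : ∫ t in (0:ℝ)..(2*π), Real.sin (((j:ℝ)+2)*t) = 0 := by
    have := integral_sin_freq (j+2)
    push_cast at this
    exact this
  have e2 : ∫ t in (0:ℝ)..(2*π), Real.sin ((j:ℝ)*t) = 0 := integral_sin_freq j
  have e4 : ∫ t in (0:ℝ)..(2*π), Real.cos (((j:ℝ)+2)*t) = 0 := by
    have := integral_cos_freq (j+2)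
    rw [if_neg (by omega)] at this
    push_cast at this
    exact this
  have e3 : ∫ t in (0:ℝ)..(2*π), Real.cos ((j:ℝ)*t) = if j = 0 then 2*π else 0 :=
    integral_cos_freq j
  rw [e1, e2, e3, e4]
  rcases Nat.eq_zero_or_pos j with hj | hj
  · subst hj
    rw [if_pos rfl, if_pos rfl]
    simp only [Nat.cast_zero, zero_add] at hn ⊢
    rw [hn]
    rw [show (1:ℝ)*s = s by ring]
    ring
  · rw [if_neg (by omega), if_neg (by omega)]
    ring

/-- the first (singular) integral, for a single mode -/
lemma I_int (j : ℕ) (s α : ℝ) :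
    ∫ t in (0:ℝ)..(2*π), Real.log (1/(4*Real.sin (t/2)^2)) *
      (α * Real.cos ((((j:ℝ)+1))*(s-t)) * Real.sin t
        + (-((((j:ℝ)+1))*α) * Real.sin ((((j:ℝ)+1))*(s-t))
            - -((((j:ℝ)+1))*α) * Real.sin ((((j:ℝ)+1))*s)) * Real.cos t)
    = 2*π*(j:ℝ)*α*Real.sin (((j:ℝ)+1)*s) + (if j = 0 then π*α*Real.sin s else 0) := by
  set n : ℝ := (j:ℝ)+1 with hn
  set σ : ℝ := Real.sin (n*s) with hσ
  set c : ℝ := Real.cos (n*s) with hc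
  set W : ℝ → ℝ := fun t => Real.log (1/(4*Real.sin (t/2)^2)) with hW
  set c1 : ℝ := -(α*σ)*((j:ℝ)+2)/2 with hc1
  set c2 : ℝ := -(α*σ)*(j:ℝ)/2 with hc2
  set c3 : ℝ := (α*c)*((j:ℝ)+2)/2 with hc3
  set c4 : ℝ := (α*c)*(j:ℝ)/2 with hc4
  set c5 : ℝ := n*α*σ with hc5
  have hB : ∀ t : ℝ, α * Real.cos (n*(s-t)) * Real.sin t
        + (-(n*α) * Real.sin (n*(s-t)) - -(n*α) * Real.sin (n*s)) * Real.cos t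
      = c1 * Real.cos (((j:ℝ)+2)*t) + c2 * Real.cos ((j:ℝ)*t)
        + c3 * Real.sin (((j:ℝ)+2)*t) + c4 * Real.sin ((j:ℝ)*t)
        + c5 * Real.cos (((0:ℝ)+1)*t) := by
    intro t
    rw [hc1, hc2, hc3, hc4, hc5, hσ, hc,
      show n*(s-t) = n*s - n*t by ring, show ((j:ℝ)+2)*t = n*t + t by rw [hn]; ring,
      show (j:ℝ)*t = n*t - t by rw [hn]; ring, show ((0:ℝ)+1)*t = t by ring,
      Real.cos_sub (n*s) (n*t), Real.sin_sub (n*s) (n*t), Real.cos_add, Real.cos_sub (n*t) t,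
      Real.sin_add, Real.sin_sub (n*t) t]
    ring
  have hfun : (fun t => W t * (α * Real.cos (n*(s-t)) * Real.sin t
        + (-(n*α) * Real.sin (n*(s-t)) - -(n*α) * Real.sin (n*s)) * Real.cos t))
      = fun t => c1 * (W t * Real.cos (((j:ℝ)+2)*t)) + c2 * (W t * Real.cos ((j:ℝ)*t))
        + c3 * (W t * Real.sin (((j:ℝ)+2)*t)) + c4 * (W t * Real.sin ((j:ℝ)*t))
        + c5 * (W t * Real.cos (((0:ℝ)+1)*t)) := by
    funext t
    rw [hB t]
    ring
  have hmul : ∀ (r : ℝ) (h : ℝ → ℝ), Measurable h → (∀ x, |h x| ≤ 1) →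
      IntervalIntegrable (fun t => r * (W t * h t)) volume 0 (2*π) := by
    intro r h hm hb
    have := (il_W_mul (g := h) (C := 1) hm hb)
    have h2 : IntervalIntegrable (fun t => r * (Real.log (1/(4*Real.sin (t/2)^2)) * h t))
        volume 0 (2*π) := by
      have h3 := this.smul r
      refine h3.congr_ae (Filter.Eventually.of_forall fun x => ?_)
      simp [smul_eq_mul]
    exact h2
  have m1 : Measurable fun t : ℝ => Real.cos (((j:ℝ)+2)*t) := by fun_prop
  have m2 : Measurable fun t : ℝ => Real.cos ((j:ℝ)*t) := by fun_prop
  have m3 : Measurable fun t : ℝ => Real.sin (((j:ℝ)+2)*t) := by fun_prop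
  have m4 : Measurable fun t : ℝ => Real.sin ((j:ℝ)*t) := by fun_prop
  have m5 : Measurable fun t : ℝ => Real.cos (((0:ℝ)+1)*t) := by fun_prop
  have i1 := hmul c1 _ m1 (fun x => Real.abs_cos_le_one _)
  have i2 := hmul c2 _ m2 (fun x => Real.abs_cos_le_one _)
  have i3 := hmul c3 _ m3 (fun x => Real.abs_sin_le_one _)
  have i4 := hmul c4 _ m4 (fun x => Real.abs_sin_le_one _)
  have i5 := hmul c5 _ m5 (fun x => Real.abs_cos_le_one _)
  rw [show (fun t => Real.log (1/(4*Real.sin (t/2)^2)) *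
      (α * Real.cos ((((j:ℝ)+1))*(s-t)) * Real.sin t
        + (-((((j:ℝ)+1))*α) * Real.sin ((((j:ℝ)+1))*(s-t))
            - -((((j:ℝ)+1))*α) * Real.sin ((((j:ℝ)+1))*s)) * Real.cos t)) = (fun t => W t * (α * Real.cos (n*(s-t)) * Real.sin t
        + (-(n*α) * Real.sin (n*(s-t)) - -(n*α) * Real.sin (n*s)) * Real.cos t)) from rfl]
  rw [hfun]
  rw [intervalIntegral.integral_add ((((i1.add i2)).add i3).add i4) i5,
    intervalIntegral.integral_add (((i1.add i2)).add i3) i4,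
    intervalIntegral.integral_add ((i1.add i2)) i3,
    intervalIntegral.integral_add i1 i2]
  simp only [intervalIntegral.integral_const_mul]
  have e1 : ∫ t in (0:ℝ)..(2*π), W t * Real.cos (((j:ℝ)+2)*t) = 2*π/((j:ℝ)+2) := by
    have := W_cos_integral (j+1)
    push_cast at this
    rw [show ((j:ℝ)+1+1) = (j:ℝ)+2 by ring] at this
    exact this
  have e3 : ∫ t in (0:ℝ)..(2*π), W t * Real.sin (((j:ℝ)+2)*t) = 0 := by
    have := W_sin_integral (j+2)
    push_cast at this
    exact this
  have e4 : ∫ t in (0:ℝ)..(2*π), W t * Real.sin ((j:ℝ)*t) = 0 := W_sin_integral j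
  have e5 : ∫ t in (0:ℝ)..(2*π), W t * Real.cos (((0:ℝ)+1)*t) = 2*π := by
    have := W_cos_integral 0
    push_cast at this
    rw [this]
    norm_num
  have e2 : c2 * (∫ t in (0:ℝ)..(2*π), W t * Real.cos ((j:ℝ)*t))
      = if j = 0 then 0 else -(α*σ)*π := by
    rcases Nat.eq_zero_or_pos j with hj | hj
    · subst hj
      rw [if_pos rfl, hc2]
      norm_num
    · obtain ⟨i, rfl⟩ : ∃ i, j = i + 1 := ⟨j - 1, by omega⟩
      rw [if_neg (by omega)]
      have := W_cos_integral i
      push_cast at this ⊢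
      rw [this, hc2]
      push_cast
      have : ((i:ℝ)+1) ≠ 0 := by positivity
      field_simp
  rw [e1, e3, e4, e5, e2]
  have hj2 : ((j:ℝ)+2) ≠ 0 := by positivity
  rcases Nat.eq_zero_or_pos j with hj | hj
  · subst hj
    rw [if_pos rfl, if_pos rfl]
    simp only [hc1, hc2, hc3, hc4, hc5, hσ, hc, hn, Nat.cast_zero]
    rw [show ((0:ℝ)+1)*s = s by ring]
    field_simp
    ring
  · rw [if_neg (by omega), if_neg (by omega)]
    simp only [hc1, hc2, hc3, hc4, hc5, hσ, hc, hn]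
    field_simp
    ring




lemma summable_sq {k : ℕ} (hk : 3 ≤ k) {a : ℕ → ℝ}
    (ha : Summable (fun j : ℕ => ((j : ℝ) + 1) ^ (2 * k) * (a (j + 1)) ^ 2)) :
    Summable (fun j : ℕ => ((j : ℝ) + 1)^2 * |a (j + 1)|) := by
  have hp2 : Summable (fun j : ℕ => 1/((j:ℝ)+1)^2) := by
    have h := summable_one_div_nat_pow (p := 2) |>.2 (by norm_num)
    have h2 := (summable_nat_add_iff (f := fun n : ℕ => 1 / (n : ℝ) ^ 2) 1).2 h
    refine h2.congr fun j => ?_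
    push_cast
    ring
  have hmaj := (ha.add hp2).mul_left (1/2)
  refine Summable.of_nonneg_of_le (fun j => by positivity) (fun j => ?_) hmaj
  have h1 : (1:ℝ) ≤ (j:ℝ)+1 := by linarith [Nat.cast_nonneg (α := ℝ) j]
  have key : ((j:ℝ)+1)^2 * |a (j+1)| = (((j:ℝ)+1)^k * |a (j+1)|) * (1/((j:ℝ)+1)^(k-2)) := by
    have hsplit : ((j:ℝ)+1)^k = ((j:ℝ)+1)^2 * ((j:ℝ)+1)^(k-2) := by
      rw [← pow_add]; congr 1; omega
    have hpos : ((j:ℝ)+1)^(k-2) ≠ 0 := by positivity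
    rw [hsplit]; field_simp
  have hAM : (((j:ℝ)+1)^k * |a (j+1)|) * (1/((j:ℝ)+1)^(k-2))
      ≤ 1/2 * ((((j:ℝ)+1)^k * |a (j+1)|)^2 + (1/((j:ℝ)+1)^(k-2))^2) := by
    nlinarith [sq_nonneg ((((j:ℝ)+1)^k * |a (j+1)|) - 1/((j:ℝ)+1)^(k-2))]
  have hx2 : (((j:ℝ)+1)^k * |a (j+1)|)^2 = ((j:ℝ)+1)^(2*k) * (a (j+1))^2 := by
    rw [mul_pow, ← pow_mul, sq_abs, mul_comm k 2]
  have hy2 : (1/((j:ℝ)+1)^(k-2))^2 ≤ 1/((j:ℝ)+1)^2 := by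
    rw [div_pow, one_pow, ← pow_mul]
    apply one_div_le_one_div_of_le (by positivity)
    exact pow_le_pow_right₀ h1 (by omega)
  calc ((j:ℝ)+1)^2 * |a (j+1)|
      = (((j:ℝ)+1)^k * |a (j+1)|) * (1/((j:ℝ)+1)^(k-2)) := key
    _ ≤ 1/2 * ((((j:ℝ)+1)^k * |a (j+1)|)^2 + (1/((j:ℝ)+1)^(k-2))^2) := hAM
    _ ≤ 1/2 * (((j:ℝ)+1)^(2*k) * (a (j+1))^2 + 1/((j:ℝ)+1)^2) := by
        rw [hx2]
        have := hy2
        nlinarith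
    _ = 1/2 * (((j:ℝ)+1)^(2*k) * (a (j+1))^2 + 1/((j:ℝ)+1)^2) := rfl

lemma summable_lin {k : ℕ} (hk : 3 ≤ k) {a : ℕ → ℝ}
    (ha : Summable (fun j : ℕ => ((j : ℝ) + 1) ^ (2 * k) * (a (j + 1)) ^ 2)) :
    Summable (fun j : ℕ => ((j : ℝ) + 1) * |a (j + 1)|) := by
  refine Summable.of_nonneg_of_le (fun j => by positivity) (fun j => ?_) (summable_sq hk ha)
  have h1 : (1:ℝ) ≤ (j:ℝ)+1 := by linarith [Nat.cast_nonneg (α := ℝ) j]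
  have h2 : ((j:ℝ)+1) ≤ ((j:ℝ)+1)^2 := by nlinarith
  exact mul_le_mul_of_nonneg_right h2 (abs_nonneg _)

lemma summable_abs {k : ℕ} (hk : 3 ≤ k) {a : ℕ → ℝ}
    (ha : Summable (fun j : ℕ => ((j : ℝ) + 1) ^ (2 * k) * (a (j + 1)) ^ 2)) :
    Summable (fun j : ℕ => |a (j + 1)|) := by
  refine Summable.of_nonneg_of_le (fun j => by positivity) (fun j => ?_) (summable_lin hk ha)
  have h1 : (1:ℝ) ≤ (j:ℝ)+1 := by linarith [Nat.cast_nonneg (α := ℝ) j]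
  calc |a (j+1)| = 1 * |a (j+1)| := by ring
    _ ≤ ((j:ℝ)+1) * |a (j+1)| := mul_le_mul_of_nonneg_right h1 (abs_nonneg _)




lemma interchange {F : ℕ → ℝ → ℝ} {c : ℕ → ℝ} (hmeas : ∀ j, Measurable (F j))
    (hbound : ∀ j t, |F j t| ≤ c j) (hc : Summable c) :
    ∫ t in (0:ℝ)..(2*π), Real.log (1/(4*Real.sin (t/2)^2)) * (∑' j, F j t)
      = ∑' j, ∫ t in (0:ℝ)..(2*π), Real.log (1/(4*Real.sin (t/2)^2)) * F j t := by
  have h2π : (0:ℝ) ≤ 2*π := by positivity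
  have hInt : ∀ j, IntegrableOn
      (fun t => Real.log (1/(4*Real.sin (t/2)^2)) * F j t) (Ioc 0 (2*π)) volume := by
    intro j
    have := il_W_mul (g := F j) (C := c j) (hmeas j) (hbound j)
    rwa [intervalIntegrable_iff_integrableOn_Ioc_of_le h2π] at this
  have hWn : IntegrableOn (fun t => ‖Real.log (1/(4*Real.sin (t/2)^2))‖)
      (Ioc 0 (2*π)) volume := by
    have := il_W.norm
    rwa [intervalIntegrable_iff_integrableOn_Ioc_of_le h2π] at this
  have hNormBound : ∀ j, (∫ t in Ioc (0:ℝ) (2*π), ‖Real.log (1/(4*Real.sin (t/2)^2)) * F j t‖)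
      ≤ c j * (∫ t in Ioc (0:ℝ) (2*π), ‖Real.log (1/(4*Real.sin (t/2)^2))‖) := by
    intro j
    have hle : (fun t => ‖Real.log (1/(4*Real.sin (t/2)^2)) * F j t‖)
        ≤ fun t => c j * ‖Real.log (1/(4*Real.sin (t/2)^2))‖ := by
      intro t
      dsimp only
      rw [norm_mul]
      calc ‖Real.log (1/(4*Real.sin (t/2)^2))‖ * ‖F j t‖
          ≤ ‖Real.log (1/(4*Real.sin (t/2)^2))‖ * c j :=
            mul_le_mul_of_nonneg_left (by simpa [Real.norm_eq_abs] using hbound j t)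
              (norm_nonneg _)
        _ = c j * ‖Real.log (1/(4*Real.sin (t/2)^2))‖ := by ring
    calc (∫ t in Ioc (0:ℝ) (2*π), ‖Real.log (1/(4*Real.sin (t/2)^2)) * F j t‖)
        ≤ ∫ t in Ioc (0:ℝ) (2*π), c j * ‖Real.log (1/(4*Real.sin (t/2)^2))‖ :=
          integral_mono ((hInt j).norm) (hWn.const_mul _) hle
      _ = c j * (∫ t in Ioc (0:ℝ) (2*π), ‖Real.log (1/(4*Real.sin (t/2)^2))‖) :=
          integral_const_mul _ _
  have hSumNorm : Summable
      (fun j => ∫ t in Ioc (0:ℝ) (2*π), ‖Real.log (1/(4*Real.sin (t/2)^2)) * F j t‖) :=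
    Summable.of_nonneg_of_le (fun j => integral_nonneg fun t => norm_nonneg _) hNormBound
      (hc.mul_right _)
  rw [intervalIntegral.integral_of_le h2π]
  have hpush : (∫ x in Ioc (0:ℝ) (2*π), Real.log (1/(4*Real.sin (x/2)^2)) * ∑' j, F j x)
      = ∫ x in Ioc (0:ℝ) (2*π), ∑' j, Real.log (1/(4*Real.sin (x/2)^2)) * F j x := by
    congr 1
    funext x
    exact tsum_mul_left.symm
  rw [hpush, ← MeasureTheory.integral_tsum_of_summable_integral_norm (fun j => hInt j) hSumNorm]
  exact tsum_congr fun j => (intervalIntegral.integral_of_le h2π).symm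

lemma interchange2 {F : ℕ → ℝ → ℝ} {c : ℕ → ℝ} (hcont : ∀ j, Continuous (F j))
    (hbound : ∀ j t, |F j t| ≤ c j) (hc : Summable c) :
    ∫ t in (0:ℝ)..(2*π), (∑' j, F j t) = ∑' j, ∫ t in (0:ℝ)..(2*π), F j t := by
  have h2π : (0:ℝ) ≤ 2*π := by positivity
  have hInt : ∀ j, IntegrableOn (F j) (Ioc 0 (2*π)) volume := by
    intro j
    have := (hcont j).intervalIntegrable (μ := volume) 0 (2*π)
    rwa [intervalIntegrable_iff_integrableOn_Ioc_of_le h2π] at this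
  have hvol : (volume (Ioc (0:ℝ) (2*π))).toReal = 2*π := by
    rw [Real.volume_Ioc, ENNReal.toReal_ofReal (by rw [sub_zero]; positivity)]
    ring
  have hNormBound : ∀ j, (∫ t in Ioc (0:ℝ) (2*π), ‖F j t‖) ≤ c j * (2*π) := by
    intro j
    have hle : (fun t => ‖F j t‖) ≤ fun _ => c j := by
      intro t
      simpa [Real.norm_eq_abs] using hbound j t
    calc (∫ t in Ioc (0:ℝ) (2*π), ‖F j t‖)
        ≤ ∫ _ in Ioc (0:ℝ) (2*π), c j :=
          integral_mono ((hInt j).norm) (integrableOn_const measure_Ioc_lt_top.ne) hle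
      _ = c j * (2*π) := by
          rw [setIntegral_const, measureReal_def, hvol, smul_eq_mul]
          ring
  have hSumNorm : Summable (fun j => ∫ t in Ioc (0:ℝ) (2*π), ‖F j t‖) :=
    Summable.of_nonneg_of_le (fun j => integral_nonneg fun t => norm_nonneg _) hNormBound
      (hc.mul_right _)
  rw [intervalIntegral.integral_of_le h2π,
    ← MeasureTheory.integral_tsum_of_summable_integral_norm (fun j => hInt j) hSumNorm]
  exact tsum_congr fun j => (intervalIntegral.integral_of_le h2π).symm


end CDauxLinearization

open CDauxLinearization in
open Real in
/-- Linearization of the contour-dynamics functional at the unit disc: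
if v(s) = Σ_{j≥1} a_j cos(js) (with H^k coefficients, k ≥ 3), then
L v (s) = Σ_{j≥1} ((j−1)/2) a_j sin(js). -/
theorem linearization_unit_disc (k : ℕ) (hk : 3 ≤ k) (a : ℕ → ℝ)
    (ha : Summable (fun j : ℕ => ((j : ℝ) + 1) ^ (2 * k) * (a (j + 1)) ^ 2))
    (v : ℝ → ℝ)
    (hv : ∀ s, v s = ∑' j : ℕ, a (j + 1) * Real.cos (((j : ℝ) + 1) * s))
    (hv' : ∀ s, deriv v s
      = ∑' j : ℕ, -(((j : ℝ) + 1) * a (j + 1)) * Real.sin (((j : ℝ) + 1) * s))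
    (s : ℝ) :
    (1 / (4 * π)) * (∫ t in (0:ℝ)..(2 * π),
        Real.log (1 / (4 * Real.sin (t / 2) ^ 2)) *
          (v (s - t) * Real.sin t + (deriv v (s - t) - deriv v s) * Real.cos t))
      - (1 / (4 * π)) * (∫ t in (0:ℝ)..(2 * π), Real.sin t * v (s - t))
    = ∑' j : ℕ, ((j : ℝ) / 2) * a (j + 1) * Real.sin (((j : ℝ) + 1) * s) := by
  have hl := summable_lin hk ha
  have habs := summable_abs hk ha
  -- pointwise expansion of the bracket
  have hA : ∀ t : ℝ, v (s-t) * Real.sin t + (deriv v (s-t) - deriv v s) * Real.cos t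
      = ∑' j : ℕ, (a (j+1) * Real.cos (((j:ℝ)+1)*(s-t)) * Real.sin t
          + (-(((j:ℝ)+1) * a (j+1)) * Real.sin (((j:ℝ)+1)*(s-t))
              - -(((j:ℝ)+1) * a (j+1)) * Real.sin (((j:ℝ)+1)*s)) * Real.cos t) := by
    intro t
    have S1 : Summable (fun j : ℕ => a (j+1) * Real.cos (((j:ℝ)+1)*(s-t))) := by
      refine Summable.of_norm_bounded habs (fun j => ?_)
      rw [Real.norm_eq_abs, abs_mul]
      calc |a (j+1)| * |Real.cos (((j:ℝ)+1)*(s-t))| ≤ |a (j+1)| * 1 :=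
        mul_le_mul_of_nonneg_left (Real.abs_cos_le_one _) (abs_nonneg _)
      _ = |a (j+1)| := by ring
    have S2 : Summable (fun j : ℕ => -(((j:ℝ)+1) * a (j+1)) * Real.sin (((j:ℝ)+1)*(s-t))) := by
      refine Summable.of_norm_bounded hl (fun j => ?_)
      rw [Real.norm_eq_abs, abs_mul, abs_neg, abs_mul,
        abs_of_nonneg (by positivity : (0:ℝ) ≤ (j:ℝ)+1)]
      calc ((j:ℝ)+1) * |a (j+1)| * |Real.sin (((j:ℝ)+1)*(s-t))|
          ≤ ((j:ℝ)+1) * |a (j+1)| * 1 :=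
            mul_le_mul_of_nonneg_left (Real.abs_sin_le_one _) (by positivity)
        _ = ((j:ℝ)+1) * |a (j+1)| := by ring
    have S3 : Summable (fun j : ℕ => -(((j:ℝ)+1) * a (j+1)) * Real.sin (((j:ℝ)+1)*s)) := by
      refine Summable.of_norm_bounded hl (fun j => ?_)
      rw [Real.norm_eq_abs, abs_mul, abs_neg, abs_mul,
        abs_of_nonneg (by positivity : (0:ℝ) ≤ (j:ℝ)+1)]
      calc ((j:ℝ)+1) * |a (j+1)| * |Real.sin (((j:ℝ)+1)*s)|
          ≤ ((j:ℝ)+1) * |a (j+1)| * 1 :=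
            mul_le_mul_of_nonneg_left (Real.abs_sin_le_one _) (by positivity)
        _ = ((j:ℝ)+1) * |a (j+1)| := by ring
    have hcalc : ∑' j : ℕ, (a (j+1) * Real.cos (((j:ℝ)+1)*(s-t)) * Real.sin t
          + (-(((j:ℝ)+1) * a (j+1)) * Real.sin (((j:ℝ)+1)*(s-t))
              - -(((j:ℝ)+1) * a (j+1)) * Real.sin (((j:ℝ)+1)*s)) * Real.cos t)
        = (∑' j : ℕ, a (j+1) * Real.cos (((j:ℝ)+1)*(s-t))) * Real.sin t
          + ((∑' j : ℕ, -(((j:ℝ)+1) * a (j+1)) * Real.sin (((j:ℝ)+1)*(s-t)))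
              - ∑' j : ℕ, -(((j:ℝ)+1) * a (j+1)) * Real.sin (((j:ℝ)+1)*s)) * Real.cos t := by
      rw [Summable.tsum_add (S1.mul_right _) ((S2.sub S3).mul_right _), tsum_mul_right, tsum_mul_right,
        Summable.tsum_sub S2 S3]
    rw [hv (s-t), hv' (s-t), hv' s, hcalc]
  have hH : ∀ t : ℝ, Real.sin t * v (s-t)
      = ∑' j : ℕ, Real.sin t * (a (j+1) * Real.cos (((j:ℝ)+1)*(s-t))) := by
    intro t
    rw [hv (s-t)]
    exact tsum_mul_left.symm
  -- bounds for the singular interchange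
  have hFmeas : ∀ j : ℕ, Measurable (fun t : ℝ =>
      a (j+1) * Real.cos (((j:ℝ)+1)*(s-t)) * Real.sin t
        + (-(((j:ℝ)+1) * a (j+1)) * Real.sin (((j:ℝ)+1)*(s-t))
            - -(((j:ℝ)+1) * a (j+1)) * Real.sin (((j:ℝ)+1)*s)) * Real.cos t) := by
    intro j
    fun_prop
  have hFbound : ∀ (j : ℕ) (t : ℝ),
      |a (j+1) * Real.cos (((j:ℝ)+1)*(s-t)) * Real.sin t
        + (-(((j:ℝ)+1) * a (j+1)) * Real.sin (((j:ℝ)+1)*(s-t))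
            - -(((j:ℝ)+1) * a (j+1)) * Real.sin (((j:ℝ)+1)*s)) * Real.cos t|
      ≤ (((j:ℝ)+1) * |a (j+1)|) * 3 := by
    intro j t
    have hn1 : (1:ℝ) ≤ (j:ℝ)+1 := by
      have := Nat.cast_nonneg (α := ℝ) j
      linarith
    have h1 : |a (j+1) * Real.cos (((j:ℝ)+1)*(s-t)) * Real.sin t| ≤ |a (j+1)| := by
      rw [abs_mul, abs_mul]
      calc |a (j+1)| * |Real.cos (((j:ℝ)+1)*(s-t))| * |Real.sin t|
          ≤ |a (j+1)| * 1 * 1 := by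
            gcongr
            · exact Real.abs_cos_le_one _
            · exact Real.abs_sin_le_one _
        _ = |a (j+1)| := by ring
    have h2 : |(-(((j:ℝ)+1) * a (j+1)) * Real.sin (((j:ℝ)+1)*(s-t))
          - -(((j:ℝ)+1) * a (j+1)) * Real.sin (((j:ℝ)+1)*s)) * Real.cos t|
        ≤ 2*(((j:ℝ)+1) * |a (j+1)|) := by
      rw [abs_mul]
      have hx : |(-(((j:ℝ)+1) * a (j+1)) * Real.sin (((j:ℝ)+1)*(s-t))
            - -(((j:ℝ)+1) * a (j+1)) * Real.sin (((j:ℝ)+1)*s))|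
          ≤ 2*(((j:ℝ)+1) * |a (j+1)|) := by
        have hb1 : |(-(((j:ℝ)+1) * a (j+1)) * Real.sin (((j:ℝ)+1)*(s-t)))|
            ≤ ((j:ℝ)+1) * |a (j+1)| := by
          rw [abs_mul, abs_neg, abs_mul, abs_of_nonneg (by positivity : (0:ℝ) ≤ (j:ℝ)+1)]
          calc ((j:ℝ)+1) * |a (j+1)| * |Real.sin (((j:ℝ)+1)*(s-t))|
              ≤ ((j:ℝ)+1) * |a (j+1)| * 1 :=
                mul_le_mul_of_nonneg_left (Real.abs_sin_le_one _) (by positivity)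
            _ = ((j:ℝ)+1) * |a (j+1)| := by ring
        have hb2 : |(-(((j:ℝ)+1) * a (j+1)) * Real.sin (((j:ℝ)+1)*s))|
            ≤ ((j:ℝ)+1) * |a (j+1)| := by
          rw [abs_mul, abs_neg, abs_mul, abs_of_nonneg (by positivity : (0:ℝ) ≤ (j:ℝ)+1)]
          calc ((j:ℝ)+1) * |a (j+1)| * |Real.sin (((j:ℝ)+1)*s)|
              ≤ ((j:ℝ)+1) * |a (j+1)| * 1 :=
                mul_le_mul_of_nonneg_left (Real.abs_sin_le_one _) (by positivity)
            _ = ((j:ℝ)+1) * |a (j+1)| := by ring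
        calc |(-(((j:ℝ)+1) * a (j+1)) * Real.sin (((j:ℝ)+1)*(s-t))
              - -(((j:ℝ)+1) * a (j+1)) * Real.sin (((j:ℝ)+1)*s))|
            ≤ |(-(((j:ℝ)+1) * a (j+1)) * Real.sin (((j:ℝ)+1)*(s-t)))|
              + |(-(((j:ℝ)+1) * a (j+1)) * Real.sin (((j:ℝ)+1)*s))| := abs_sub _ _
          _ ≤ 2*(((j:ℝ)+1) * |a (j+1)|) := by linarith
      calc |(-(((j:ℝ)+1) * a (j+1)) * Real.sin (((j:ℝ)+1)*(s-t))
            - -(((j:ℝ)+1) * a (j+1)) * Real.sin (((j:ℝ)+1)*s))| * |Real.cos t|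
          ≤ (2*(((j:ℝ)+1) * |a (j+1)|)) * 1 := by
            gcongr <;> first
              | exact hx
              | exact Real.abs_cos_le_one t
        _ = 2*(((j:ℝ)+1) * |a (j+1)|) := by ring
    have habs_a : |a (j+1)| ≤ ((j:ℝ)+1) * |a (j+1)| := by
      nlinarith [abs_nonneg (a (j+1))]
    calc |a (j+1) * Real.cos (((j:ℝ)+1)*(s-t)) * Real.sin t
        + (-(((j:ℝ)+1) * a (j+1)) * Real.sin (((j:ℝ)+1)*(s-t))
            - -(((j:ℝ)+1) * a (j+1)) * Real.sin (((j:ℝ)+1)*s)) * Real.cos t|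
        ≤ |a (j+1) * Real.cos (((j:ℝ)+1)*(s-t)) * Real.sin t|
          + |(-(((j:ℝ)+1) * a (j+1)) * Real.sin (((j:ℝ)+1)*(s-t))
            - -(((j:ℝ)+1) * a (j+1)) * Real.sin (((j:ℝ)+1)*s)) * Real.cos t| := abs_add_le _ _
      _ ≤ (((j:ℝ)+1) * |a (j+1)|) * 3 := by linarith
  -- evaluate the first integral
  have e1 : ∫ t in (0:ℝ)..(2*π),
      Real.log (1 / (4 * Real.sin (t / 2) ^ 2)) *
        (v (s - t) * Real.sin t + (deriv v (s - t) - deriv v s) * Real.cos t)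
      = ∑' j : ℕ, (2*π*(j:ℝ)*a (j+1)*Real.sin (((j:ℝ)+1)*s)
          + (if j = 0 then π*a (j+1)*Real.sin s else 0)) := by
    rw [intervalIntegral.integral_congr
      (g := fun t => Real.log (1/(4*Real.sin (t/2)^2)) *
        (∑' j : ℕ, (a (j+1) * Real.cos (((j:ℝ)+1)*(s-t)) * Real.sin t
          + (-(((j:ℝ)+1) * a (j+1)) * Real.sin (((j:ℝ)+1)*(s-t))
              - -(((j:ℝ)+1) * a (j+1)) * Real.sin (((j:ℝ)+1)*s)) * Real.cos t)))
      (fun t _ => by dsimp only; rw [hA t])]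
    rw [interchange hFmeas hFbound (hl.mul_right 3)]
    exact tsum_congr fun j => I_int j s (a (j+1))
  -- evaluate the second integral
  have e2 : ∫ t in (0:ℝ)..(2*π), Real.sin t * v (s - t) = π * a 1 * Real.sin s := by
    rw [intervalIntegral.integral_congr
      (g := fun t => ∑' j : ℕ, Real.sin t * (a (j+1) * Real.cos (((j:ℝ)+1)*(s-t))))
      (fun t _ => by dsimp only; rw [hH t])]
    rw [interchange2 (F := fun j t => Real.sin t * (a (j+1) * Real.cos (((j:ℝ)+1)*(s-t))))
      (c := fun j => |a (j+1)|)
      (fun j => by fun_prop)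
      (fun j t => by
        rw [abs_mul, abs_mul]
        calc |Real.sin t| * (|a (j+1)| * |Real.cos (((j:ℝ)+1)*(s-t))|)
            ≤ 1 * (|a (j+1)| * 1) := by
              gcongr
              · exact Real.abs_sin_le_one t
              · exact Real.abs_cos_le_one _
          _ = |a (j+1)| := by ring)
      habs]
    rw [tsum_congr (fun j => J_int j s (a (j+1)))]
    rw [tsum_eq_single 0 (fun b hb => if_neg hb), if_pos rfl]
  rw [e1, e2]
  have hS1 : Summable (fun j : ℕ => 2*π*(j:ℝ)*a (j+1)*Real.sin (((j:ℝ)+1)*s)) := by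
    refine Summable.of_norm_bounded (hl.mul_right (2*π)) (fun j => ?_)
    rw [Real.norm_eq_abs, abs_mul, abs_mul, abs_mul,
      abs_of_nonneg (by positivity : (0:ℝ) ≤ 2*π), abs_of_nonneg (Nat.cast_nonneg j)]
    calc 2*π*(j:ℝ) * |a (j+1)| * |Real.sin (((j:ℝ)+1)*s)|
        ≤ 2*π*((j:ℝ)+1) * |a (j+1)| * 1 := by
          gcongr
          · linarith
          · exact Real.abs_sin_le_one _
      _ = ((j:ℝ)+1) * |a (j+1)| * (2*π) := by ring
  have hS2 : Summable (fun j : ℕ => if j = 0 then π*a (j+1)*Real.sin s else 0) :=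
    summable_of_ne_finset_zero (s := {0}) (fun b hb => if_neg (by simpa using hb))
  rw [Summable.tsum_add hS1 hS2, tsum_eq_single 0 (fun b hb => if_neg hb), if_pos rfl]
  have hrw : ∀ j : ℕ, ((j:ℝ)/2) * a (j+1) * Real.sin (((j:ℝ)+1)*s)
      = (1/(4*π)) * (2*π*(j:ℝ)*a (j+1)*Real.sin (((j:ℝ)+1)*s)) := by
    intro j
    have hπ : π ≠ 0 := ne_of_gt Real.pi_pos
    field_simp
    ring
  rw [tsum_congr hrw, tsum_mul_left]
  ring
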